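/- For k ≥ 2 and w ≥ 3, the poset Q_{k,w} contains no two disjoint incomparable chains each of size k. -/

import Mathlib

/-- The ground set of `Q_{k,w}`: triples `(ℓ, i, j)` with `1 ≤ ℓ ≤ w - 1`
(the copy index) and `1 ≤ j ≤ i ≤ k - 1` (an element `v_{i,j}` of `P_{k-1}`). -/
def Qelt (k w : ℕ) : Type :=
  {x : Fin w × Fin k × Fin k //
    1 ≤ (x.1 : ℕ) ∧ 1 ≤ (x.2.2 : ℕ) ∧ (x.2.2 : ℕ) ≤ (x.2.1 : ℕ)}

/-- The strict order of `Q_{k,w}`: within a copy the order of `P_{k-1}`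
(`v_{i,j} < v_{i',j'}` iff `i ≤ i' - 2`, or `i ∈ {i'-1, i'}` and `j ≤ j' - 1`),
and `v^ℓ_{i,j} < v^{ℓ'}_{i',j'}` whenever `ℓ < ℓ'` and `i ≠ k - 1`. -/
def Qlt {k w : ℕ} (u v : Qelt k w) : Prop :=
  ((u.1.1 : ℕ) = (v.1.1 : ℕ) ∧
    ((u.1.2.1 : ℕ) + 2 ≤ (v.1.2.1 : ℕ) ∨
      (((u.1.2.1 : ℕ) + 1 = (v.1.2.1 : ℕ) ∨ (u.1.2.1 : ℕ) = (v.1.2.1 : ℕ)) ∧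
        (u.1.2.2 : ℕ) + 1 ≤ (v.1.2.2 : ℕ)))) ∨
  ((u.1.1 : ℕ) < (v.1.1 : ℕ) ∧ (u.1.2.1 : ℕ) ≠ k - 1)

def QIncomp {k w : ℕ} (u v : Qelt k w) : Prop := ¬ Qlt u v ∧ ¬ Qlt v u

/-- A chain of `Q_{k,w}`. -/
def QChain {k w : ℕ} (s : Finset (Qelt k w)) : Prop :=
  ∀ u ∈ s, ∀ v ∈ s, u ≠ v → Qlt u v ∨ Qlt v u


lemma qext {k w : ℕ} {u v : Qelt k w} (h1 : (u.1.1 : ℕ) = (v.1.1 : ℕ))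
    (h2 : (u.1.2.1 : ℕ) = (v.1.2.1 : ℕ)) (h3 : (u.1.2.2 : ℕ) = (v.1.2.2 : ℕ)) : u = v :=
  Subtype.ext (Prod.ext (Fin.ext h1) (Prod.ext (Fin.ext h2) (Fin.ext h3)))

/-- A chain with constant ℓ and constant i has size at most k-1. -/
lemma qsmall {k w : ℕ} (S : Finset (Qelt k w)) (hS : QChain S)
    (L I : ℕ) (hL : ∀ x ∈ S, (x.1.1 : ℕ) = L) (hI : ∀ x ∈ S, (x.1.2.1 : ℕ) = I) :
    S.card ≤ k - 1 := by
  have h := Finset.card_le_card_of_injOn (fun x : Qelt k w => (x.1.2.2 : ℕ))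
    (s := S) (t := Finset.Icc 1 (k - 1)) ?_ ?_
  · simpa [Nat.card_Icc] using h
  · intro x hx
    have h2 := x.2.2.1
    have h3 := x.2.2.2
    have h4 : (x.1.2.1 : ℕ) < k := x.1.2.1.isLt
    simp only [Finset.coe_Icc, Set.mem_Icc, Finset.mem_coe, Finset.mem_Icc]
    omega
  · intro x hx y hy hxy
    simp only at hxy
    by_contra hne
    have hc := hS x hx y hy hne
    have hLx := hL x hx; have hLy := hL y hy
    have hIx := hI x hx; have hIy := hI y hy
    unfold Qlt at hc
    omega

/-- `Q_{k,w}` contains no two disjoint incomparable chains each of size `k`. -/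
theorem stmt10 (k w : ℕ) (hk : 2 ≤ k) (hw : 3 ≤ w) :
    ¬ ∃ A B : Finset (Qelt k w), A.card = k ∧ B.card = k ∧ Disjoint A B ∧
        QChain A ∧ QChain B ∧ ∀ a ∈ A, ∀ b ∈ B, QIncomp a b := by
  rintro ⟨A, B, hA, hB, hD, hCA, hCB, hInc⟩
  -- If a chain spans two copies, the other chain is constant-ℓ constant-(k-1), contradiction.
  have span : ∀ (X Y : Finset (Qelt k w)), Y.card = k → QChain X → QChain Y →
      (∀ x ∈ X, ∀ y ∈ Y, QIncomp x y) →
      ∀ a ∈ X, ∀ a' ∈ X, (a.1.1 : ℕ) < (a'.1.1 : ℕ) → False := by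
    intro X Y hYc hCX hCY hIXY a ha a' ha' hlt
    have hne : a ≠ a' := by
      intro h; rw [h] at hlt; exact lt_irrefl _ hlt
    have hc := hCX a ha a' ha' hne
    have hia : (a.1.2.1 : ℕ) ≠ k - 1 := by
      unfold Qlt at hc; omega
    -- every y in Y has i = k-1
    have hiY : ∀ y ∈ Y, (y.1.2.1 : ℕ) = k - 1 := by
      intro y hy
      have h1 := (hIXY a ha y hy).1
      have h2 := (hIXY a' ha' y hy).1
      have h3 := (hIXY a' ha' y hy).2
      unfold Qlt at h1 h2 h3
      omega
    -- Y has constant ℓ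
    have hYne : Y.Nonempty := by rw [← Finset.card_pos, hYc]; omega
    obtain ⟨y0, hy0⟩ := hYne
    have hLY : ∀ y ∈ Y, (y.1.1 : ℕ) = (y0.1.1 : ℕ) := by
      intro y hy
      by_cases h : y = y0
      · rw [h]
      · have hc2 := hCY y hy y0 hy0 h
        have hi1 := hiY y hy
        have hi2 := hiY y0 hy0
        unfold Qlt at hc2
        omega
    have := qsmall Y hCY _ _ hLY hiY
    omega
  -- So both chains have constant ℓ
  have hAne : A.Nonempty := by rw [← Finset.card_pos, hA]; omega
  have hBne : B.Nonempty := by rw [← Finset.card_pos, hB]; omega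
  obtain ⟨a0, ha0⟩ := hAne
  obtain ⟨b0, hb0⟩ := hBne
  have hIncBA : ∀ b ∈ B, ∀ a ∈ A, QIncomp b a := by
    intro b hb a ha
    exact ⟨(hInc a ha b hb).2, (hInc a ha b hb).1⟩
  have hLA : ∀ a ∈ A, (a.1.1 : ℕ) = (a0.1.1 : ℕ) := by
    intro a ha
    by_contra h
    rcases Nat.lt_or_ge (a.1.1 : ℕ) (a0.1.1 : ℕ) with h' | h'
    · exact span A B hB hCA hCB hInc a ha a0 ha0 h'
    · exact span A B hB hCA hCB hInc a0 ha0 a ha (by omega)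
  have hLB : ∀ b ∈ B, (b.1.1 : ℕ) = (b0.1.1 : ℕ) := by
    intro b hb
    by_contra h
    rcases Nat.lt_or_ge (b.1.1 : ℕ) (b0.1.1 : ℕ) with h' | h'
    · exact span B A hA hCB hCA hIncBA b hb b0 hb0 h'
    · exact span B A hA hCB hCA hIncBA b0 hb0 b hb (by omega)
  -- cross-copy case: the lower chain has constant i = k-1
  have cross : ∀ (X : Finset (Qelt k w)), X.card = k → QChain X →
      ∀ (y : Qelt k w), (∀ x ∈ X, QIncomp x y) →
      (∀ x ∈ X, (x.1.1 : ℕ) < (y.1.1 : ℕ)) → False := by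
    intro X hXc hCX y hIXy hlt
    have hiX : ∀ x ∈ X, (x.1.2.1 : ℕ) = k - 1 := by
      intro x hx
      have h1 := (hIXy x hx).1
      have hl := hlt x hx
      unfold Qlt at h1
      omega
    have hXne : X.Nonempty := by rw [← Finset.card_pos, hXc]; omega
    obtain ⟨x0, hx0⟩ := hXne
    have hLX : ∀ x ∈ X, (x.1.1 : ℕ) = (x0.1.1 : ℕ) := by
      intro x hx
      by_cases h : x = x0
      · rw [h]
      · have hc2 := hCX x hx x0 hx0 h
        have hi1 := hiX x hx
        have hi2 := hiX x0 hx0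
        unfold Qlt at hc2
        omega
    have := qsmall X hCX _ _ hLX hiX
    omega
  rcases Nat.lt_trichotomy (a0.1.1 : ℕ) (b0.1.1 : ℕ) with hl | hl | hl
  · exact cross A hA hCA b0 (fun a ha => hInc a ha b0 hb0)
      (fun a ha => by have := hLA a ha; omega)
  · -- same copy: the P_{k-1} argument
    -- every cross pair has |i difference| = 1
    have hDist : ∀ a ∈ A, ∀ b ∈ B,
        (a.1.2.1 : ℕ) + 1 = (b.1.2.1 : ℕ) ∨ (b.1.2.1 : ℕ) + 1 = (a.1.2.1 : ℕ) := by
      intro a ha b hb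
      have h1 := (hInc a ha b hb).1
      have h2 := (hInc a ha b hb).2
      have hla := hLA a ha
      have hlb := hLB b hb
      have hij : ¬ ((a.1.2.1 : ℕ) = (b.1.2.1 : ℕ) ∧ (a.1.2.2 : ℕ) = (b.1.2.2 : ℕ)) := by
        rintro ⟨e1, e2⟩
        have : a = b := qext (by omega) e1 e2
        exact (Finset.disjoint_left.mp hD ha) (this ▸ hb)
      unfold Qlt at h1 h2
      omega
    by_cases hAi : ∀ a ∈ A, (a.1.2.1 : ℕ) = (a0.1.2.1 : ℕ)
    · have := qsmall A hCA _ _ hLA hAi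
      omega
    · push_neg at hAi
      obtain ⟨a1, ha1, hne1⟩ := hAi
      have hBi : ∀ b ∈ B, (b.1.2.1 : ℕ) = (b0.1.2.1 : ℕ) := by
        intro b hb
        have d1 := hDist a0 ha0 b hb
        have d2 := hDist a1 ha1 b hb
        have d3 := hDist a0 ha0 b0 hb0
        have d4 := hDist a1 ha1 b0 hb0
        omega
      have := qsmall B hCB _ _ hLB hBi
      omega
  · exact cross B hB hCB a0 (fun b hb => hIncBA b hb a0 ha0)
      (fun b hb => by have := hLB b hb; omega)
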